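/- Let M ≥ 1 be an integer, λ > 1, 0 ≤ ε < λ−1, and let 0 < ε' < ε and λ' > λ satisfy λ'(1−ε') > λ. If a finite set S of conjugacy classes of nontrivial elements of F_N is (M,λ',ε',W_N)-minimizing, then S is (M,λ,ε)-minimizing. -/
import Mathlib


/-- `(M,λ,ε)`-minimizing set (see the paper, Definition d:MLE), in the abstract
model where `G = Out(F_N)` acts on the set `C` of conjugacy classes and
`len = ‖·‖_A` is the cyclically reduced length. -/
def IsMinimizingSet (G : Type*) {C : Type*} [Group G] [MulAction G C]
    (len : C → ℕ) (M : ℕ) (lam eps : ℝ) (S : Finset C) : Prop :=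
  (∀ u ∈ S, 0 < len u) ∧
  S.card ≤ M ∧
  (∀ u ∈ S, ∀ u' ∈ S, ∃ φ : G, φ • u = u') ∧
  (∀ u ∈ S, ∀ u' ∈ S,
      (1 - eps) * (len u : ℝ) ≤ (len u' : ℝ) ∧ (len u' : ℝ) ≤ (1 + eps) * (len u : ℝ)) ∧
  (∀ u ∈ S, ∀ φ : G, φ • u ∉ S → lam * (len u : ℝ) ≤ (len (φ • u) : ℝ))

/-- `(M,λ,ε,W_N)`-minimizing set (Definition d:MLEW), where `W ⊆ G` is the set
of nontrivial Whitehead moves. -/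
def IsWMinimizingSet {G C : Type*} [Group G] [MulAction G C] (W : Set G)
    (len : C → ℕ) (M : ℕ) (lam eps : ℝ) (S : Finset C) : Prop :=
  (∀ u ∈ S, 0 < len u) ∧
  S.card ≤ M ∧
  (∀ u ∈ S, ∀ u' ∈ S, ∃ φ : G, φ • u = u') ∧
  (∀ u ∈ S, ∀ u' ∈ S,
      (1 - eps) * (len u : ℝ) ≤ (len u' : ℝ) ∧ (len u' : ℝ) ≤ (1 + eps) * (len u : ℝ)) ∧
  (∀ u ∈ S, ∀ τ ∈ W, τ • u ∉ S → lam * (len u : ℝ) ≤ (len (τ • u) : ℝ))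

/-- with `0 < ε' < ε < λ - 1 < λ' - 1` and `λ'(1-ε') > λ`, every
`(M,λ',ε',W_N)`-minimizing set is `(M,λ,ε)`-minimizing.  Peak reduction is
assumed as the hypothesis `hpeak`: any `φ ∈ Out(F_N)` factors as a chain of
Whitehead moves with all intermediate classes of length
`≤ max(‖w‖_A, ‖φ(w)‖_A)`. -/
theorem stmt2 {G C : Type*} [Group G] [MulAction G C] (W : Set G)
    (len : C → ℕ) (M : ℕ) (lam eps lam' eps' : ℝ)
    (hM : 1 ≤ M) (hlam : 1 < lam) (heps0 : 0 ≤ eps) (heps : eps < lam - 1)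
    (heps'0 : 0 < eps') (heps' : eps' < eps) (hlam' : lam < lam')
    (hkey : lam < lam' * (1 - eps'))
    (hpeak : ∀ (w : C) (φ : G),
      ∃ (k : ℕ) (c : ℕ → C), c 0 = w ∧ c k = φ • w ∧
        (∀ i < k, ∃ τ ∈ W, τ • c i = c (i + 1)) ∧
        (∀ i ≤ k, len (c i) ≤ max (len w) (len (φ • w))))
    (S : Finset C) (hS : IsWMinimizingSet W len M lam' eps' S) :
    IsMinimizingSet G len M lam eps S := by

  obtain ⟨hpos, hcard, htrans, hratio, hmin⟩ := hS
  refine ⟨hpos, hcard, htrans, ?_, ?_⟩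
  · intro u hu u' hu'
    obtain ⟨h1, h2⟩ := hratio u hu u' hu'
    have hl : (0:ℝ) ≤ (len u : ℝ) := Nat.cast_nonneg _
    constructor
    · nlinarith
    · nlinarith
  · intro u hu φ hφ
    classical
    obtain ⟨k, c, hc0, hck, hstep, hbd⟩ := hpeak u φ
    have hex : ∃ i, c i ∉ S := ⟨k, hck ▸ hφ⟩
    have hiS : c (Nat.find hex) ∉ S := Nat.find_spec hex
    have hik : Nat.find hex ≤ k := Nat.find_le (hck ▸ hφ)
    have hi0 : Nat.find hex ≠ 0 := by
      intro h
      exact hiS (by rw [h, hc0]; exact hu)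
    obtain ⟨j, hj⟩ : ∃ j, Nat.find hex = j + 1 :=
      ⟨Nat.find hex - 1, (Nat.succ_pred_eq_of_pos (Nat.pos_of_ne_zero hi0)).symm⟩
    have hjS : c j ∈ S := by
      by_contra h
      have : Nat.find hex ≤ j := Nat.find_le h
      omega
    rw [hj] at hiS hik
    obtain ⟨τ, hτW, hτ⟩ := hstep j (by omega)
    have hmin' : lam' * (len (c j) : ℝ) ≤ (len (τ • c j) : ℝ) :=
      hmin (c j) hjS τ hτW (by rw [hτ]; exact hiS)
    rw [hτ] at hmin'
    have hr : (1 - eps') * (len u : ℝ) ≤ (len (c j) : ℝ) := (hratio u hu (c j) hjS).1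
    have hupos : (0:ℝ) < (len u : ℝ) := by exact_mod_cast hpos u hu
    have h1 : lam' * ((1 - eps') * (len u : ℝ)) ≤ (len (c (j+1)) : ℝ) :=
      le_trans (mul_le_mul_of_nonneg_left hr (by linarith)) hmin'
    have hmax := hbd (j+1) (by omega)
    have hcases : len (c (j+1)) ≤ len u ∨ len (c (j+1)) ≤ len (φ • u) := by omega
    rcases hcases with h | h
    · exfalso
      have : (len (c (j+1)) : ℝ) ≤ (len u : ℝ) := by exact_mod_cast h
      nlinarith
    · have : (len (c (j+1)) : ℝ) ≤ (len (φ • u) : ℝ) := by exact_mod_cast h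
      nlinarith
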